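/- Matrix-Vector Product of a Block-Encoding with a Vector-Encoding (Lemma 2.3): Let U_A be an (α,a,ε₀)-block-encoding of an n-qubit matrix A ∈ ℂ^{2^n×2^n} (U_A acts on ℂ^{2^a} ⊗ ℂ^{2^n}), and let U_ψ be a (β,b,ε₁)-VE for the ℓ2-normalized vector |ψ⟩ ∈ ℂ^{2^n} (U_ψ acts on ℂ^{2^b} ⊗ ℂ^{2^n}). On the Hilbert space ℂ^{2^a} ⊗ ℂ^{2^b} ⊗ ℂ^{2^n}, let Ũ_A denote U_A acting on the first and third tensor factors (identity on the second) and Ũ_ψ denote U_ψ acting on the second and third tensor factors (identity on the first). Let 𝒩 := ‖A|ψ⟩‖₂ and assume 𝒩 > 0. Then U := Ũ_A Ũ_ψ is an (αβ/𝒩, a+b, (ε₀ + αε₁)/𝒩)-VE for A|ψ⟩/𝒩; equivalently, ‖A|ψ⟩ − αβ(⟨0|_{a+b} ⊗ I_n)U|0⟩_{a+b+n}‖₂ ≤ ε₀ + αε₁. -/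

import Mathlib

open scoped Kronecker Matrix

noncomputable section

/-- Reinterpret a plain function as an element of `EuclideanSpace`. -/
def toEuc {𝕜 : Type*} [RCLike 𝕜] {ι : Type*} (v : ι → 𝕜) : EuclideanSpace 𝕜 ι := WithLp.toLp 2 v

/-- The spectral (ℓ²→ℓ²) operator norm of a matrix. -/
def specNorm {𝕜 : Type*} [RCLike 𝕜] {m n : Type*} [Fintype m] [Fintype n] [DecidableEq n]
    (A : Matrix m n 𝕜) : ℝ :=
  ‖LinearMap.toContinuousLinearMap (Matrix.toEuclideanLin A)‖

/-- The vector encoded in the first block of the first column of `U`: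
`(⟨0| ⊗ I) U |0⟩`. -/
def encVec {I N : Type*} [Zero I] [Zero N] (U : Matrix (I × N) (I × N) ℂ) :
    EuclideanSpace ℂ N := toEuc fun i => U (0, i) (0, 0)

/-- `U` is an `(α, ·, ε)`-vector-encoding of `ψ`. -/
def IsVE {I N : Type*} [Fintype I] [DecidableEq I] [Zero I] [Fintype N] [DecidableEq N] [Zero N]
    (U : Matrix (I × N) (I × N) ℂ) (α ε : ℝ) (ψ : EuclideanSpace ℂ N) : Prop :=
  U ∈ Matrix.unitaryGroup (I × N) ℂ ∧ ‖ψ - (α : ℂ) • encVec U‖ ≤ ε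

/-- The top-left block `(⟨0| ⊗ I) U (|0⟩ ⊗ I)` of a matrix. -/
def topLeft {I N : Type*} [Zero I] (U : Matrix (I × N) (I × N) ℂ) : Matrix N N ℂ :=
  Matrix.of fun i j => U (0, i) (0, j)

/-- `U` is an `(α, ·, ε)`-block-encoding of `A`. -/
def IsBE {I N : Type*} [Fintype I] [DecidableEq I] [Zero I] [Fintype N] [DecidableEq N]
    (U : Matrix (I × N) (I × N) ℂ) (α ε : ℝ) (A : Matrix N N ℂ) : Prop :=
  U ∈ Matrix.unitaryGroup (I × N) ℂ ∧ specNorm (A - (α : ℂ) • topLeft U) ≤ ε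

/-- **Matrix-vector product of a block-encoding with a vector-encoding** (Lemma 2.3).
`UAt` is `U_A` acting on the first and third tensor factors of
`ℂ^{2^a} ⊗ ℂ^{2^b} ⊗ ℂ^{2^n}` and `Uψt = I_a ⊗ U_ψ` acts on the second and third.
Then `U = UAt * Uψt` (with the ancilla registers grouped first, i.e. reindexed along the
product associator) is an `(αβ/𝒩, a + b, (ε₀ + αε₁)/𝒩)`-VE for `A ψ / 𝒩`. -/
lemma clm_apply {m n : Type*} [Fintype m] [Fintype n] [DecidableEq n]
    (M : Matrix m n ℂ) (x : EuclideanSpace ℂ n) :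
    LinearMap.toContinuousLinearMap (Matrix.toEuclideanLin M) x = toEuc (M.mulVec x) := by
  ext i; simp [toEuc, Matrix.toEuclideanLin]

lemma mulVec_norm_le {m n : Type*} [Fintype m] [Fintype n] [DecidableEq n]
    (M : Matrix m n ℂ) (x : EuclideanSpace ℂ n) :
    ‖toEuc (M.mulVec x)‖ ≤ specNorm M * ‖x‖ := by
  rw [← clm_apply]
  exact (LinearMap.toContinuousLinearMap (Matrix.toEuclideanLin M)).le_opNorm x

lemma sum_normSq_eq (ι : Type*) [Fintype ι] (z : ι → ℂ) :
    ∑ i, ‖z i‖^2 = (dotProduct (star z) z).re := by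
  rw [dotProduct, Complex.re_sum]
  refine Finset.sum_congr rfl fun i _ => ?_
  simp [Pi.star_apply, Complex.conj_mul', ← Complex.sq_norm, ← Complex.ofReal_pow, Complex.ofReal_re]

lemma unitary_mulVec_normSq {ι : Type*} [Fintype ι] [DecidableEq ι]
    {U : Matrix ι ι ℂ} (hU : U ∈ Matrix.unitaryGroup ι ℂ) (y : ι → ℂ) :
    ∑ i, ‖U.mulVec y i‖^2 = ∑ i, ‖y i‖^2 := by
  rw [sum_normSq_eq, sum_normSq_eq, Matrix.star_mulVec, Matrix.dotProduct_mulVec,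
    Matrix.vecMul_vecMul]
  have h1 : Uᴴ * U = 1 := (Matrix.mem_unitaryGroup_iff'.mp hU)
  rw [h1, Matrix.vecMul_one]

lemma specNorm_topLeft_le {I N : Type*} [Fintype I] [DecidableEq I] [Zero I]
    [Fintype N] [DecidableEq N]
    {U : Matrix (I × N) (I × N) ℂ} (hU : U ∈ Matrix.unitaryGroup (I × N) ℂ) :
    specNorm (topLeft U) ≤ 1 := by
  refine ContinuousLinearMap.opNorm_le_bound _ zero_le_one fun x => ?_
  rw [one_mul, clm_apply]
  set x' : (I × N) → ℂ := fun p => if p.1 = 0 then x p.2 else 0 with hx'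
  have key : ∀ i, (topLeft U).mulVec x i = U.mulVec x' (0, i) := by
    intro i
    simp [Matrix.mulVec, dotProduct, hx', Fintype.sum_prod_type, topLeft]
  have hnx : ‖x‖ = Real.sqrt (∑ i, ‖x i‖^2) := by
    rw [EuclideanSpace.norm_eq]
  have hb : ‖toEuc ((topLeft U).mulVec x)‖^2 ≤ ‖x‖^2 := by
    rw [EuclideanSpace.norm_eq, hnx, Real.sq_sqrt (by positivity), Real.sq_sqrt (by positivity)]
    have h1 : ∑ i, ‖(topLeft U).mulVec x i‖^2 ≤ ∑ p, ‖U.mulVec x' p‖^2 := by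
      calc ∑ i, ‖(topLeft U).mulVec x i‖^2 = ∑ i, ‖U.mulVec x' (0, i)‖^2 := by
            simp_rw [key]
        _ ≤ ∑ p, ‖U.mulVec x' p‖^2 := by
            rw [Fintype.sum_prod_type]
            refine Finset.single_le_sum (f := fun p => ∑ i, ‖U.mulVec x' (p, i)‖^2)
              (fun p _ => by positivity) (Finset.mem_univ 0)
    have h2 : ∑ p, ‖U.mulVec x' p‖^2 = ∑ i, ‖x i‖^2 := by
      rw [unitary_mulVec_normSq hU]
      rw [Fintype.sum_prod_type]
      simp [hx', apply_ite (‖·‖), Finset.sum_ite_eq]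
    calc ∑ i, ‖toEuc ((topLeft U).mulVec x) i‖^2 ≤ ∑ p, ‖U.mulVec x' p‖^2 := by simpa [toEuc] using h1
      _ = _ := h2
  have := Real.sqrt_le_sqrt hb
  rwa [Real.sqrt_sq (norm_nonneg _), Real.sqrt_sq (norm_nonneg _)] at this

lemma kron_conjTranspose {l m n p : Type*} (A : Matrix l m ℂ) (B : Matrix n p ℂ) :
    (A ⊗ₖ B)ᴴ = Aᴴ ⊗ₖ Bᴴ := by
  ext ⟨i, j⟩ ⟨k, l⟩
  simp [Matrix.conjTranspose_apply, Matrix.kroneckerMap_apply]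

lemma kron_mem_unitary {m n : Type*} [Fintype m] [DecidableEq m] [Fintype n] [DecidableEq n]
    {A : Matrix m m ℂ} {B : Matrix n n ℂ}
    (hA : A ∈ Matrix.unitaryGroup m ℂ) (hB : B ∈ Matrix.unitaryGroup n ℂ) :
    A ⊗ₖ B ∈ Matrix.unitaryGroup (m × n) ℂ := by
  rw [Matrix.mem_unitaryGroup_iff] at hA hB ⊢
  show (A ⊗ₖ B) * (A ⊗ₖ B)ᴴ = 1
  rw [kron_conjTranspose, ← Matrix.mul_kronecker_mul]
  rw [show A * Aᴴ = 1 from hA, show B * Bᴴ = 1 from hB, Matrix.one_kronecker_one]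

lemma reindex_mem_unitary {m n : Type*} [Fintype m] [DecidableEq m] [Fintype n] [DecidableEq n]
    {A : Matrix m m ℂ} (e : m ≃ n) (hA : A ∈ Matrix.unitaryGroup m ℂ) :
    Matrix.reindex e e A ∈ Matrix.unitaryGroup n ℂ := by
  rw [Matrix.mem_unitaryGroup_iff] at hA ⊢
  show Matrix.reindex e e A * (Matrix.reindex e e A)ᴴ = 1
  have : (Matrix.reindex e e A)ᴴ = Matrix.reindex e e Aᴴ := by
    ext i j; simp [Matrix.conjTranspose_apply]
  rw [this, ← Matrix.reindexAlgEquiv_apply ℂ, ← Matrix.reindexAlgEquiv_apply ℂ, ← map_mul,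
    show A * Aᴴ = 1 from hA, map_one]

def assocSwap (A B C : Type*) : (A × C) × B ≃ A × (B × C) where
  toFun x := (x.1.1, (x.2, x.1.2))
  invFun y := ((y.1, y.2.2), y.2.1)
  left_inv := fun _ => rfl
  right_inv := fun _ => rfl

theorem matrix_vector_product_of_BE_and_VE
    (a b n : ℕ) (α β ε₀ ε₁ : ℝ)
    (hα : 0 ≤ α) (hβ : 1 ≤ β) (hε₀ : 0 ≤ ε₀) (hε₁ : 0 ≤ ε₁)
    (UA : Matrix (Fin (2^a) × Fin (2^n)) (Fin (2^a) × Fin (2^n)) ℂ)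
    (A : Matrix (Fin (2^n)) (Fin (2^n)) ℂ)
    (hUA : IsBE UA α ε₀ A)
    (Uψ : Matrix (Fin (2^b) × Fin (2^n)) (Fin (2^b) × Fin (2^n)) ℂ)
    (ψ : EuclideanSpace ℂ (Fin (2^n))) (hψn : ‖ψ‖ = 1)
    (hUψ : IsVE Uψ β ε₁ ψ)
    (UAt : Matrix (Fin (2^a) × (Fin (2^b) × Fin (2^n)))
        (Fin (2^a) × (Fin (2^b) × Fin (2^n))) ℂ)
    (hUAt : UAt = Matrix.of fun p q =>
        (if p.2.1 = q.2.1 then (1 : ℂ) else 0) * UA (p.1, p.2.2) (q.1, q.2.2))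
    (Uψt : Matrix (Fin (2^a) × (Fin (2^b) × Fin (2^n)))
        (Fin (2^a) × (Fin (2^b) × Fin (2^n))) ℂ)
    (hUψt : Uψt = (1 : Matrix (Fin (2^a)) (Fin (2^a)) ℂ) ⊗ₖ Uψ)
    (𝒩 : ℝ) (h𝒩 : 𝒩 = ‖toEuc (A.mulVec ψ)‖) (h𝒩pos : 0 < 𝒩) :
    IsVE (Matrix.reindex (Equiv.prodAssoc (Fin (2^a)) (Fin (2^b)) (Fin (2^n))).symm
        (Equiv.prodAssoc (Fin (2^a)) (Fin (2^b)) (Fin (2^n))).symm (UAt * Uψt))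
      (α * β / 𝒩) ((ε₀ + α * ε₁) / 𝒩) (𝒩⁻¹ • toEuc (A.mulVec ψ)) := by
  obtain ⟨hUAu, hUAb⟩ := hUA
  obtain ⟨hUψu, hUψb⟩ := hUψ
  -- unitarity
  have hUAtu : UAt ∈ Matrix.unitaryGroup (Fin (2^a) × (Fin (2^b) × Fin (2^n))) ℂ := by
    have hre : UAt = Matrix.reindex (assocSwap (Fin (2^a)) (Fin (2^b)) (Fin (2^n)))
        (assocSwap (Fin (2^a)) (Fin (2^b)) (Fin (2^n)))
        (UA ⊗ₖ (1 : Matrix (Fin (2^b)) (Fin (2^b)) ℂ)) := by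
      rw [hUAt]
      ext ⟨p₁, p₂, p₃⟩ ⟨q₁, q₂, q₃⟩
      simp [Matrix.reindex_apply, Matrix.submatrix_apply, assocSwap,
        Matrix.kroneckerMap_apply, Matrix.one_apply, mul_comm]
    rw [hre]
    exact reindex_mem_unitary _ (kron_mem_unitary hUAu (Matrix.mem_unitaryGroup_iff.mpr (by simp)))
  have hUψtu : Uψt ∈ Matrix.unitaryGroup (Fin (2^a) × (Fin (2^b) × Fin (2^n))) ℂ := by
    rw [hUψt]
    exact kron_mem_unitary (Matrix.mem_unitaryGroup_iff.mpr (by simp)) hUψu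
  have hUu := reindex_mem_unitary (Equiv.prodAssoc (Fin (2^a)) (Fin (2^b)) (Fin (2^n))).symm
    (Submonoid.mul_mem _ hUAtu hUψtu)
  refine ⟨hUu, ?_⟩
  -- the encoded vector of the product
  have hEnc : encVec (Matrix.reindex (Equiv.prodAssoc (Fin (2^a)) (Fin (2^b)) (Fin (2^n))).symm
      (Equiv.prodAssoc (Fin (2^a)) (Fin (2^b)) (Fin (2^n))).symm (UAt * Uψt))
      = toEuc ((topLeft UA).mulVec (encVec Uψ)) := by
    ext i
    show (UAt * Uψt) ((Equiv.prodAssoc _ _ _) ((0,0), i)) ((Equiv.prodAssoc _ _ _) ((0,0), 0))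
      = _
    subst hUAt hUψt
    simp only [Equiv.prodAssoc_apply, Matrix.mul_apply, Matrix.of_apply,
      Matrix.kroneckerMap_apply, Matrix.one_apply, Fintype.sum_prod_type]
    simp [topLeft, encVec, toEuc, Matrix.mulVec, dotProduct, mul_ite, ite_mul,
      zero_mul, mul_zero, Finset.sum_ite_eq, Finset.sum_ite_eq', eq_comm]
  rw [hEnc]
  set B := topLeft UA with hB
  set v := encVec Uψ with hv
  have h𝒩ne : 𝒩 ≠ 0 := ne_of_gt h𝒩pos
  have lin_apply : ∀ {m' n' : Type} [Fintype m'] [Fintype n'] [DecidableEq n']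
      (M : Matrix m' n' ℂ) (x : EuclideanSpace ℂ n'),
      Matrix.toEuclideanLin M x = toEuc (M.mulVec x) := fun _ _ => by
        ext i; simp [toEuc, Matrix.toEuclideanLin]
  have hXY : 𝒩⁻¹ • toEuc (A.mulVec ψ) - ((α * β / 𝒩 : ℝ) : ℂ) • toEuc (B.mulVec v)
      = ((𝒩⁻¹ : ℝ) : ℂ) • (toEuc ((A - (α:ℂ) • B).mulVec ψ)
        + (α : ℂ) • toEuc (B.mulVec (ψ - (β:ℂ) • v))) := by
    have h1 : toEuc ((A - (α:ℂ) • B).mulVec ψ)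
        = toEuc (A.mulVec ψ) - (α:ℂ) • toEuc (B.mulVec ψ) :=
      calc toEuc ((A - (α:ℂ) • B).mulVec ψ) = Matrix.toEuclideanLin (A - (α:ℂ) • B) ψ := rfl
        _ = Matrix.toEuclideanLin A ψ - (α:ℂ) • Matrix.toEuclideanLin B ψ := by
            rw [map_sub, map_smul, LinearMap.sub_apply, LinearMap.smul_apply]
        _ = toEuc (A.mulVec ψ) - (α:ℂ) • toEuc (B.mulVec ψ) := rfl
    have h2 : toEuc (B.mulVec (ψ - (β:ℂ) • v))
        = toEuc (B.mulVec ψ) - (β:ℂ) • toEuc (B.mulVec v) :=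
      calc toEuc (B.mulVec (ψ - (β:ℂ) • v)) = Matrix.toEuclideanLin B (ψ - (β:ℂ) • v) := rfl
        _ = Matrix.toEuclideanLin B ψ - (β:ℂ) • Matrix.toEuclideanLin B v := by
            rw [map_sub, map_smul]
        _ = toEuc (B.mulVec ψ) - (β:ℂ) • toEuc (B.mulVec v) := rfl
    have hrs : 𝒩⁻¹ • toEuc (A.mulVec ψ) = ((𝒩⁻¹ : ℝ) : ℂ) • toEuc (A.mulVec ψ) := by
      ext i
      simp [Complex.real_smul]
    rw [h1, h2, hrs]
    have hc : ((α * β / 𝒩 : ℝ) : ℂ) = ((𝒩⁻¹ : ℝ) : ℂ) * ((α:ℂ) * (β:ℂ)) := by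
      push_cast
      ring
    rw [hc]
    module
  rw [hXY, norm_smul]
  have hnr : ‖((𝒩⁻¹:ℝ):ℂ)‖ = 𝒩⁻¹ := by
    rw [Complex.norm_real, Real.norm_eq_abs, abs_of_pos (by positivity)]
  rw [hnr]
  have hb1 : ‖toEuc ((A - (α:ℂ) • B).mulVec ψ)‖ ≤ ε₀ := by
    calc ‖toEuc ((A - (α:ℂ) • B).mulVec ψ)‖ ≤ specNorm (A - (α:ℂ) • B) * ‖ψ‖ :=
          mulVec_norm_le _ _
      _ = specNorm (A - (α:ℂ) • B) := by rw [hψn, mul_one]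
      _ ≤ ε₀ := hUAb
  have hb2 : ‖(α:ℂ) • toEuc (B.mulVec (ψ - (β:ℂ) • v))‖ ≤ α * ε₁ := by
    rw [norm_smul]
    have hα' : ‖(α:ℂ)‖ = α := by
      rw [Complex.norm_real, Real.norm_eq_abs, abs_of_nonneg hα]
    rw [hα']
    refine mul_le_mul_of_nonneg_left ?_ hα
    calc ‖toEuc (B.mulVec (ψ - (β:ℂ) • v))‖ ≤ specNorm B * ‖ψ - (β:ℂ) • v‖ :=
          mulVec_norm_le _ _
      _ ≤ 1 * ε₁ := mul_le_mul (specNorm_topLeft_le hUAu) hUψb (norm_nonneg _) zero_le_one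
      _ = ε₁ := one_mul _
  calc 𝒩⁻¹ * ‖toEuc ((A - (α:ℂ) • B).mulVec ψ) + (α:ℂ) • toEuc (B.mulVec (ψ - (β:ℂ) • v))‖
      ≤ 𝒩⁻¹ * (ε₀ + α * ε₁) :=
        mul_le_mul_of_nonneg_left ((norm_add_le _ _).trans (add_le_add hb1 hb2))
          (by positivity)
    _ = (ε₀ + α * ε₁) / 𝒩 := (div_eq_inv_mul _ _).symm
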